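/- Let G be a finite group, ρ an irreducible unitary representation of G of dimension d, b ∈ ℂ^d a unit vector, and f : G → ℂ with (1/|G|)Σ_x |f(x)|² ≤ 1. Then the matrix A = d · (1/|G|) Σ_{x∈G} f(x) ρ(x)* b b* ρ(x) satisfies ‖A‖_HS² ≤ d. -/

import Mathlib

open scoped BigOperators Matrix

/-- A unitary matrix representation is irreducible if its only invariant subspaces are `⊥` and
`⊤`. -/
def IsIrredRep {G : Type*} [Group G] {d : ℕ} (ρ : G →* Matrix.unitaryGroup (Fin d) ℂ) : Prop :=
  ∀ W : Submodule ℂ (Fin d → ℂ),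
    (∀ (g : G), ∀ v ∈ W, (ρ g : Matrix (Fin d) (Fin d) ℂ) *ᵥ v ∈ W) → W = ⊥ ∨ W = ⊤


open Matrix in
lemma vecMulVec_mul_vecMulVec' {n : ℕ} (a b c e : Fin n → ℂ) :
    vecMulVec a b * vecMulVec c e = (b ⬝ᵥ c) • vecMulVec a e := by
  ext i j
  simp only [Matrix.mul_apply, vecMulVec_apply, Matrix.smul_apply, dotProduct, smul_eq_mul]
  rw [Finset.sum_mul]
  exact Finset.sum_congr rfl fun k _ => by ring

open Matrix in
lemma vecMulVec_mulVec' {n : ℕ} (a b v : Fin n → ℂ) :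
    vecMulVec a b *ᵥ v = (b ⬝ᵥ v) • a := by
  ext i
  simp only [Matrix.mulVec, vecMulVec_apply, dotProduct, Pi.smul_apply, smul_eq_mul]
  rw [Finset.sum_mul]
  exact Finset.sum_congr rfl fun k _ => by ring

open Matrix in
lemma trace_vecMulVec' {n : ℕ} (a b : Fin n → ℂ) :
    (vecMulVec a b).trace = a ⬝ᵥ b := by
  simp [Matrix.trace, Matrix.diag, vecMulVec_apply, dotProduct]

open Matrix in
lemma schur_scalar {G : Type*} [Group G] {d : ℕ} (hd : 0 < d)
    (ρ : G →* Matrix.unitaryGroup (Fin d) ℂ) (hρ : IsIrredRep ρ)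
    (T : Matrix (Fin d) (Fin d) ℂ)
    (hT : ∀ g : G, (ρ g : Matrix (Fin d) (Fin d) ℂ) * T = T * (ρ g : Matrix (Fin d) (Fin d) ℂ)) :
    ∃ c : ℂ, T = c • 1 := by
  haveI : Nonempty (Fin d) := ⟨⟨0, hd⟩⟩
  let L : Module.End ℂ (Fin d → ℂ) := Matrix.mulVecLin T
  obtain ⟨c, hc⟩ := Module.End.exists_eigenvalue L
  refine ⟨c, ?_⟩
  have hW : Module.End.eigenspace L c = ⊤ := by
    have hinv : ∀ (g : G), ∀ v ∈ Module.End.eigenspace L c,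
        (ρ g : Matrix (Fin d) (Fin d) ℂ) *ᵥ v ∈ Module.End.eigenspace L c := by
      intro g v hv
      rw [Module.End.mem_eigenspace_iff] at hv ⊢
      show T *ᵥ ((ρ g : Matrix (Fin d) (Fin d) ℂ) *ᵥ v) = c • _
      rw [Matrix.mulVec_mulVec, ← hT, ← Matrix.mulVec_mulVec]
      show (ρ g : Matrix (Fin d) (Fin d) ℂ) *ᵥ (L v) = _
      rw [hv, Matrix.mulVec_smul]
    rcases hρ (Module.End.eigenspace L c) hinv with h | h
    · exact absurd h hc
    · exact h
  have hall : ∀ v : Fin d → ℂ, T *ᵥ v = c • v := by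
    intro v
    have : v ∈ Module.End.eigenspace L c := hW ▸ Submodule.mem_top
    rw [Module.End.mem_eigenspace_iff] at this
    exact this
  ext i j
  have := congrFun (hall (Pi.single j 1)) i
  rw [Matrix.mulVec_single] at this
  simp only [Pi.smul_apply, Matrix.col_apply, op_smul_eq_mul, mul_one] at this
  rw [this]
  simp [Matrix.one_apply, Pi.single_apply, mul_comm]

open Matrix in
lemma avg_eq {G : Type*} [Group G] [Fintype G] {d : ℕ} (hd : 0 < d)
    (ρ : G →* Matrix.unitaryGroup (Fin d) ℂ) (hρ : IsIrredRep ρ)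
    (b : Fin d → ℂ) (hb : star b ⬝ᵥ b = 1) :
    ∑ y : G, (star ((ρ y : Matrix (Fin d) (Fin d) ℂ)) *
        Matrix.vecMulVec b (star b) * (ρ y : Matrix (Fin d) (Fin d) ℂ))
      = ((Fintype.card G : ℂ) / (d : ℂ)) • 1 := by
  set B : Matrix (Fin d) (Fin d) ℂ := Matrix.vecMulVec b (star b) with hB
  set T : Matrix (Fin d) (Fin d) ℂ :=
    ∑ y : G, (star ((ρ y : Matrix (Fin d) (Fin d) ℂ)) * B * (ρ y : Matrix (Fin d) (Fin d) ℂ))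
    with hTdef
  have hstarinv : ∀ g : G, star ((ρ g : Matrix (Fin d) (Fin d) ℂ)) =
      ((ρ g⁻¹ : Matrix.unitaryGroup (Fin d) ℂ) : Matrix (Fin d) (Fin d) ℂ) := by
    intro g
    rw [map_inv]
    rfl
  have hmulcoe : ∀ g h : G, ((ρ g : Matrix.unitaryGroup (Fin d) ℂ) : Matrix (Fin d) (Fin d) ℂ) *
      ((ρ h : Matrix.unitaryGroup (Fin d) ℂ) : Matrix (Fin d) (Fin d) ℂ) =
      ((ρ (g * h) : Matrix.unitaryGroup (Fin d) ℂ) : Matrix (Fin d) (Fin d) ℂ) := by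
    intro g h; rw [_root_.map_mul]; rfl
  have hcomm : ∀ g : G, (ρ g : Matrix (Fin d) (Fin d) ℂ) * T = T * (ρ g : Matrix (Fin d) (Fin d) ℂ) := by
    intro g
    rw [hTdef, Finset.mul_sum, Finset.sum_mul]
    refine Fintype.sum_equiv (Equiv.mulRight g⁻¹) _ _ fun y => ?_
    -- LHS index y, RHS index y * g⁻¹
    simp only [Equiv.coe_mulRight]
    have h1 : (ρ g : Matrix (Fin d) (Fin d) ℂ) * star ((ρ y : Matrix (Fin d) (Fin d) ℂ))
        = star ((ρ (y * g⁻¹) : Matrix (Fin d) (Fin d) ℂ)) := by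
      rw [hstarinv, hstarinv, hmulcoe]
      group
    have h2 : ((ρ (y * g⁻¹) : Matrix.unitaryGroup (Fin d) ℂ) : Matrix (Fin d) (Fin d) ℂ) *
        (ρ g : Matrix (Fin d) (Fin d) ℂ) = (ρ y : Matrix (Fin d) (Fin d) ℂ) := by
      rw [hmulcoe]; group
    calc (ρ g : Matrix (Fin d) (Fin d) ℂ) * (star ((ρ y : Matrix (Fin d) (Fin d) ℂ)) * B * (ρ y : Matrix (Fin d) (Fin d) ℂ))
        = ((ρ g : Matrix (Fin d) (Fin d) ℂ) * star ((ρ y : Matrix (Fin d) (Fin d) ℂ))) * B * (ρ y : Matrix (Fin d) (Fin d) ℂ) := by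
          simp only [Matrix.mul_assoc]
      _ = star ((ρ (y * g⁻¹) : Matrix (Fin d) (Fin d) ℂ)) * B * ((ρ (y * g⁻¹) : Matrix (Fin d) (Fin d) ℂ) * (ρ g : Matrix (Fin d) (Fin d) ℂ)) := by
          rw [h1, h2]
      _ = star ((ρ (y * g⁻¹) : Matrix (Fin d) (Fin d) ℂ)) * B * (ρ (y * g⁻¹) : Matrix (Fin d) (Fin d) ℂ) * (ρ g : Matrix (Fin d) (Fin d) ℂ) := by
          simp only [Matrix.mul_assoc]
  obtain ⟨c, hc⟩ := schur_scalar hd ρ hρ T hcomm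
  have htrB : B.trace = 1 := by
    rw [hB, trace_vecMulVec']
    rw [← hb]
    exact Finset.sum_congr rfl fun i _ => mul_comm _ _
  have htrT : T.trace = (Fintype.card G : ℂ) := by
    rw [hTdef, Matrix.trace_sum]
    have : ∀ y : G, (star ((ρ y : Matrix (Fin d) (Fin d) ℂ)) * B * (ρ y : Matrix (Fin d) (Fin d) ℂ)).trace = 1 := by
      intro y
      rw [Matrix.trace_mul_cycle]
      have : (ρ y : Matrix (Fin d) (Fin d) ℂ) * star ((ρ y : Matrix (Fin d) (Fin d) ℂ)) = 1 :=
        (ρ y).2.2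
      rw [this, Matrix.one_mul, htrB]
    simp [this]
  have hdc : (d : ℂ) ≠ 0 := Nat.cast_ne_zero.mpr hd.ne'
  have hcd : c = (Fintype.card G : ℂ) / (d : ℂ) := by
    have h := htrT
    rw [hc, Matrix.trace_smul, Matrix.trace_one] at h
    simp only [Fintype.card_fin, smul_eq_mul] at h
    rw [eq_div_iff hdc]
    exact h
  rw [← hcd, ← hc]

open Matrix in
lemma mul_vecMulVec' {n : ℕ} (M : Matrix (Fin n) (Fin n) ℂ) (v w : Fin n → ℂ) :
    M * vecMulVec v w = vecMulVec (M *ᵥ v) w := by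
  ext i j
  simp only [Matrix.mul_apply, vecMulVec_apply, Matrix.mulVec, dotProduct]
  rw [Finset.sum_mul]
  exact Finset.sum_congr rfl fun k _ => by ring

open Matrix in
lemma vecMulVec_mul' {n : ℕ} (M : Matrix (Fin n) (Fin n) ℂ) (v w : Fin n → ℂ) :
    vecMulVec v w * M = vecMulVec v (w ᵥ* M) := by
  ext i j
  simp only [Matrix.mul_apply, vecMulVec_apply, Matrix.vecMul, dotProduct]
  rw [Finset.mul_sum]
  exact Finset.sum_congr rfl fun k _ => by ring

open Matrix in
lemma conjTranspose_vecMulVec' {n : ℕ} (v w : Fin n → ℂ) :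
    (vecMulVec v w)ᴴ = vecMulVec (star w) (star v) := by
  ext i j
  simp [Matrix.conjTranspose_apply, vecMulVec_apply, mul_comm]

lemma dotProduct_conj' {n : ℕ} (v w : Fin n → ℂ) :
    star v ⬝ᵥ w = (starRingEnd ℂ) (star w ⬝ᵥ v) := by
  simp only [dotProduct, Pi.star_apply, map_sum, map_mul, Complex.star_def,
    Complex.conj_conj]
  exact Finset.sum_congr rfl fun k _ => mul_comm _ _

open Matrix in
lemma sum_mulVec' {n : ℕ} {ι : Type*} (s : Finset ι) (M : ι → Matrix (Fin n) (Fin n) ℂ)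
    (v : Fin n → ℂ) : (∑ i ∈ s, M i) *ᵥ v = ∑ i ∈ s, (M i *ᵥ v) := by
  ext j
  simp only [Matrix.mulVec, dotProduct, Matrix.sum_apply, Finset.sum_apply, Finset.sum_mul]
  exact Finset.sum_comm

open Matrix in
lemma dotProduct_sum' {n : ℕ} {ι : Type*} (s : Finset ι) (v : Fin n → ℂ)
    (w : ι → Fin n → ℂ) : v ⬝ᵥ (∑ i ∈ s, w i) = ∑ i ∈ s, v ⬝ᵥ w i := by
  simp only [dotProduct, Finset.sum_apply, Finset.mul_sum]
  exact Finset.sum_comm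


open Matrix

/-- If `ρ` is an irreducible unitary representation of a finite group `G` of dimension `d`,
`b` a unit vector and `f : G → ℂ` with `(1/|G|) Σ_x |f(x)|² ≤ 1`, then the matrix
`A = d · (1/|G|) Σ_x f(x) ρ(x)* b b* ρ(x)` satisfies `‖A‖_HS² ≤ d`. -/
theorem stmt12 (G : Type*) [Group G] [Fintype G] (d : ℕ)
    (ρ : G →* Matrix.unitaryGroup (Fin d) ℂ) (hρ : IsIrredRep ρ)
    (b : Fin d → ℂ) (hb : star b ⬝ᵥ b = 1)
    (f : G → ℂ) (hf : (Fintype.card G : ℝ)⁻¹ * ∑ x : G, ‖f x‖ ^ 2 ≤ 1) :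
    (∑ i, ∑ j,
        ‖((d : ℂ) • (Fintype.card G : ℂ)⁻¹ •
            ∑ x : G, f x •
              (star ((ρ x : Matrix (Fin d) (Fin d) ℂ)) *
                Matrix.vecMulVec b (star b) * (ρ x : Matrix (Fin d) (Fin d) ℂ))) i j‖ ^ 2) ≤
      (d : ℝ) := by
  rcases Nat.eq_zero_or_pos d with hd0 | hd
  · subst hd0; simp
  have hcardpos : (0 : ℝ) < Fintype.card G := by positivity
  -- the unit vectors
  set u : G → Fin d → ℂ := fun x => star ((ρ x : Matrix (Fin d) (Fin d) ℂ)) *ᵥ b with hu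
  have hstar_u : ∀ x, star (u x) = star b ᵥ* (ρ x : Matrix (Fin d) (Fin d) ℂ) := by
    intro x
    rw [hu]
    simp [Matrix.star_mulVec, Matrix.star_eq_conjTranspose, Matrix.conjTranspose_conjTranspose]
  have hP : ∀ x : G, star ((ρ x : Matrix (Fin d) (Fin d) ℂ)) *
      Matrix.vecMulVec b (star b) * (ρ x : Matrix (Fin d) (Fin d) ℂ)
      = vecMulVec (u x) (star (u x)) := by
    intro x
    rw [mul_vecMulVec', vecMulVec_mul', hstar_u]
  have hu1 : ∀ x, star (u x) ⬝ᵥ u x = 1 := by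
    intro x
    rw [hstar_u, hu]
    simp only
    rw [Matrix.dotProduct_mulVec, Matrix.vecMul_vecMul, Matrix.star_eq_conjTranspose]
    have : (ρ x : Matrix (Fin d) (Fin d) ℂ) * (ρ x : Matrix (Fin d) (Fin d) ℂ)ᴴ = 1 := (ρ x).2.2
    rw [this, Matrix.vecMul_one, hb]
  -- Schur orthogonality
  set p : G → G → ℂ := fun x y => star (u x) ⬝ᵥ u y with hpdef
  have hpconj : ∀ x y, p y x = (starRingEnd ℂ) (p x y) := fun x y => dotProduct_conj' _ _
  have hpsum : ∀ x : G, ∑ y : G, (Complex.normSq (p x y) : ℂ)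
      = (Fintype.card G : ℂ) / (d : ℂ) := by
    intro x
    have havg := avg_eq hd ρ hρ b hb
    have h1 : (∑ y : G, vecMulVec (u y) (star (u y)))
        = ((Fintype.card G : ℂ) / (d : ℂ)) • (1 : Matrix (Fin d) (Fin d) ℂ) := by
      rw [← havg]
      exact Finset.sum_congr rfl fun y _ => (hP y).symm
    have h2 := congrArg (fun M : Matrix (Fin d) (Fin d) ℂ => star (u x) ⬝ᵥ (M *ᵥ u x)) h1
    rw [sum_mulVec', dotProduct_sum'] at h2
    rw [Matrix.smul_mulVec, Matrix.one_mulVec, dotProduct_smul, hu1,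
      smul_eq_mul, mul_one] at h2
    rw [← h2]
    refine Finset.sum_congr rfl fun y _ => ?_
    rw [vecMulVec_mulVec', dotProduct_smul, smul_eq_mul]
    have : star (u y) ⬝ᵥ u x = (starRingEnd ℂ) (p x y) := hpconj x y
    rw [this]
    rw [mul_comm, Complex.mul_conj]
  have hpsumR : ∀ x : G, ∑ y : G, Complex.normSq (p x y)
      = (Fintype.card G : ℝ) / (d : ℝ) := by
    intro x
    have := hpsum x
    have h2 : ((∑ y : G, Complex.normSq (p x y) : ℝ) : ℂ)
        = (((Fintype.card G : ℝ) / (d : ℝ) : ℝ) : ℂ) := by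
      push_cast
      exact this
    exact_mod_cast h2
  set N : Matrix (Fin d) (Fin d) ℂ := ∑ x : G, f x • vecMulVec (u x) (star (u x)) with hN
  have hrw : (∑ x : G, f x • (star ((ρ x : Matrix (Fin d) (Fin d) ℂ)) *
      Matrix.vecMulVec b (star b) * (ρ x : Matrix (Fin d) (Fin d) ℂ))) = N := by
    rw [hN]
    exact Finset.sum_congr rfl fun x _ => by rw [hP]
  rw [hrw]
  set F : ℝ := ∑ x : G, ‖f x‖ ^ 2 with hF
  set R : ℝ := ∑ i, ∑ j, Complex.normSq (N i j) with hR
  have hdne : (d : ℝ) ≠ 0 := by positivity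
  have hcne : (Fintype.card G : ℝ) ≠ 0 := ne_of_gt hcardpos
  -- trace identity
  have hNH : Nᴴ = ∑ x : G, (starRingEnd ℂ) (f x) • vecMulVec (u x) (star (u x)) := by
    rw [hN, Matrix.conjTranspose_sum]
    refine Finset.sum_congr rfl fun x _ => ?_
    rw [Matrix.conjTranspose_smul, conjTranspose_vecMulVec', star_star]
    rfl
  have htr : (∑ i, ∑ j, (Complex.normSq (N i j) : ℂ)) = (Nᴴ * N).trace := by
    simp only [Matrix.trace, Matrix.diag, Matrix.mul_apply, Matrix.conjTranspose_apply]
    rw [Finset.sum_comm]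
    refine Finset.sum_congr rfl fun j _ => Finset.sum_congr rfl fun i _ => ?_
    rw [Complex.star_def, mul_comm, Complex.mul_conj]
  have hmul : (Nᴴ * N).trace
      = ∑ x : G, ∑ y : G, (starRingEnd ℂ) (f x) * f y * (Complex.normSq (p x y) : ℂ) := by
    rw [hNH, hN, Finset.sum_mul, Matrix.trace_sum]
    refine Finset.sum_congr rfl fun x _ => ?_
    rw [Finset.mul_sum, Matrix.trace_sum]
    refine Finset.sum_congr rfl fun y _ => ?_
    rw [Matrix.smul_mul, Matrix.mul_smul, vecMulVec_mul_vecMulVec', Matrix.trace_smul,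
      Matrix.trace_smul, Matrix.trace_smul, trace_vecMulVec']
    have e1 : star (u x) ⬝ᵥ u y = p x y := rfl
    have e2 : u x ⬝ᵥ star (u y) = (starRingEnd ℂ) (p x y) := by
      rw [dotProduct_comm]
      exact hpconj x y
    rw [e1, e2]
    simp only [smul_eq_mul]
    rw [← Complex.mul_conj]
    ring
  have hRc : ((R : ℝ) : ℂ)
      = ∑ x : G, ∑ y : G, (starRingEnd ℂ) (f x) * f y * (Complex.normSq (p x y) : ℂ) := by
    rw [← hmul, ← htr, hR]
    push_cast
    rfl
  have hRre : R = ∑ x : G, ∑ y : G,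
      ((starRingEnd ℂ) (f x) * f y).re * Complex.normSq (p x y) := by
    have h := congrArg Complex.re hRc
    rw [Complex.ofReal_re] at h
    rw [h]
    rw [Complex.re_sum]
    refine Finset.sum_congr rfl fun x _ => ?_
    rw [Complex.re_sum]
    refine Finset.sum_congr rfl fun y _ => ?_
    simp [Complex.mul_re, Complex.ofReal_re, Complex.ofReal_im]
  have hsym : ∀ x y, Complex.normSq (p x y) = Complex.normSq (p y x) := by
    intro x y
    rw [hpconj y x]
    exact Complex.normSq_conj _
  have hbound : R ≤ ((Fintype.card G : ℝ) / d) * F := by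
    have step1 : R ≤ ∑ x : G, ∑ y : G,
        ((‖f x‖ ^ 2 + ‖f y‖ ^ 2) / 2) * Complex.normSq (p x y) := by
      rw [hRre]
      refine Finset.sum_le_sum fun x _ => Finset.sum_le_sum fun y _ => ?_
      refine mul_le_mul_of_nonneg_right ?_ (Complex.normSq_nonneg _)
      have h1 : ((starRingEnd ℂ) (f x) * f y).re ≤ ‖f x‖ * ‖f y‖ := by
        refine le_trans (Complex.re_le_norm _) ?_
        rw [norm_mul, Complex.norm_conj]
      refine le_trans h1 ?_
      nlinarith [sq_nonneg (‖f x‖ - ‖f y‖)]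
    have step2 : (∑ x : G, ∑ y : G,
        ((‖f x‖ ^ 2 + ‖f y‖ ^ 2) / 2) * Complex.normSq (p x y))
        = ((Fintype.card G : ℝ) / d) * F := by
      have e : ∀ x y : G, ((‖f x‖ ^ 2 + ‖f y‖ ^ 2) / 2) * Complex.normSq (p x y)
          = ‖f x‖ ^ 2 * Complex.normSq (p x y) / 2
            + ‖f y‖ ^ 2 * Complex.normSq (p x y) / 2 := by
        intro x y; ring
      simp_rw [e, Finset.sum_add_distrib]
      have h2 : (∑ x : G, ∑ y : G, ‖f y‖ ^ 2 * Complex.normSq (p x y) / 2)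
          = ∑ x : G, ∑ y : G, ‖f x‖ ^ 2 * Complex.normSq (p x y) / 2 := by
        rw [Finset.sum_comm]
        refine Finset.sum_congr rfl fun x _ => Finset.sum_congr rfl fun y _ => ?_
        rw [hsym x y]
      rw [h2, ← Finset.sum_add_distrib, hF, Finset.mul_sum]
      refine Finset.sum_congr rfl fun x _ => ?_
      rw [← Finset.sum_add_distrib]
      have e2 : ∀ y : G, ‖f x‖ ^ 2 * Complex.normSq (p x y) / 2
          + ‖f x‖ ^ 2 * Complex.normSq (p x y) / 2
          = ‖f x‖ ^ 2 * Complex.normSq (p x y) := fun y => by ring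
      simp_rw [e2]
      rw [← Finset.mul_sum, hpsumR x]
      ring
    calc R ≤ _ := step1
      _ = ((Fintype.card G : ℝ) / d) * F := step2
  have hSnorm : (∑ i, ∑ j, ‖((d : ℂ) • (Fintype.card G : ℂ)⁻¹ • N) i j‖ ^ 2)
      = ((d : ℝ) * (Fintype.card G : ℝ)⁻¹) ^ 2 * R := by
    rw [hR, Finset.mul_sum]
    refine Finset.sum_congr rfl fun i _ => ?_
    rw [Finset.mul_sum]
    refine Finset.sum_congr rfl fun j _ => ?_
    rw [Matrix.smul_apply, Matrix.smul_apply, smul_eq_mul, smul_eq_mul, norm_mul, norm_mul,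
      Complex.norm_natCast, norm_inv, Complex.norm_natCast, mul_pow, mul_pow,
      Complex.sq_norm]
    ring
  rw [hSnorm]
  have hfin : ((d : ℝ) * (Fintype.card G : ℝ)⁻¹) ^ 2 * (((Fintype.card G : ℝ) / d) * F)
      = (d : ℝ) * ((Fintype.card G : ℝ)⁻¹ * F) := by
    field_simp
  calc ((d : ℝ) * (Fintype.card G : ℝ)⁻¹) ^ 2 * R
      ≤ ((d : ℝ) * (Fintype.card G : ℝ)⁻¹) ^ 2 * (((Fintype.card G : ℝ) / d) * F) :=
        mul_le_mul_of_nonneg_left hbound (by positivity)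
    _ = (d : ℝ) * ((Fintype.card G : ℝ)⁻¹ * F) := hfin
    _ ≤ (d : ℝ) * 1 := mul_le_mul_of_nonneg_left hf (by positivity)
    _ = (d : ℝ) := mul_one _
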